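/- Let a₁, …, a_m ∈ (0,1] with m ≥ 2 and Σᵢ aᵢ^{√2} ≤ 1, and let c ∈ [0,1]. Then there exists α₀ ∈ (0,√2] with Σᵢ aᵢ^{α₀} = 1, and for every α ∈ [0, α₀], c^α ≤ Σᵢ aᵢ^α. -/
import Mathlib


theorem stmt_8 (m : ℕ) (hm : 2 ≤ m) (a : Fin m → ℝ)
    (ha : ∀ i, 0 < a i ∧ a i ≤ 1) (hsum : ∑ i, (a i) ^ (Real.sqrt 2) ≤ 1)
    (c : ℝ) (hc : 0 ≤ c) (hc1 : c ≤ 1) :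
    ∃ α₀ : ℝ, 0 < α₀ ∧ α₀ ≤ Real.sqrt 2 ∧ (∑ i, (a i) ^ α₀ = 1) ∧
      ∀ α : ℝ, 0 ≤ α → α ≤ α₀ → c ^ α ≤ ∑ i, (a i) ^ α := by
  set f : ℝ → ℝ := fun α => ∑ i, (a i) ^ α with hf
  have hcont : Continuous f := by
    apply continuous_finset_sum
    intro i _
    exact continuous_const.rpow continuous_id fun x => Or.inl (ha i).1.ne'
  have hsqrt : (0 : ℝ) ≤ Real.sqrt 2 := Real.sqrt_nonneg 2
  have hf0 : f 0 = m := by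
    simp [hf, Real.rpow_zero]
  have h1 : (1 : ℝ) ∈ Set.Icc (f (Real.sqrt 2)) (f 0) := by
    constructor
    · exact hsum
    · rw [hf0]
      exact_mod_cast le_trans (by norm_num) hm
  have := intermediate_value_Icc' hsqrt hcont.continuousOn h1
  obtain ⟨α₀, hα₀mem, hα₀⟩ := this
  have hα₀pos : 0 < α₀ := by
    rcases lt_or_eq_of_le hα₀mem.1 with h | h
    · exact h
    · exfalso
      rw [← h] at hα₀
      rw [hf0] at hα₀
      have : (2 : ℝ) ≤ 1 := by
        calc (2:ℝ) ≤ (m:ℝ) := by exact_mod_cast hm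
        _ = 1 := hα₀
      linarith
  refine ⟨α₀, hα₀pos, hα₀mem.2, hα₀, fun α hα hαle => ?_⟩
  have hle : f α₀ ≤ f α := by
    apply Finset.sum_le_sum
    intro i _
    exact Real.rpow_le_rpow_of_exponent_ge (ha i).1 (ha i).2 hαle
  calc c ^ α ≤ 1 := Real.rpow_le_one hc hc1 hα
    _ = f α₀ := hα₀.symm
    _ ≤ f α := hle
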